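/- arXiv:2409.08004 — 2 statements merged into one kernel-verified Lean document; each statement's English description precedes it below -/
import Mathlib

section
/- Let A be an n×n real matrix, d ∈ ℝ, u > 0, α ∈ ℝ, γ ≠ 0. Let x^(1), …, x^(n) ∈ ℝ^n and b^(1), …, b^(n) ∈ ℝ^n satisfy, for each k and each i, −d·x^(k)_i + u·tanh(α·x^(k)_i + γ·(A x^(k))_i) + b^(k)_i = 0. Define y^(k) ∈ ℝ^n by y^(k)_i = (1/γ)·( artanh((d·x^(k)_i − b^(k)_i)/u) − α·x^(k)_i ), and let X and Y be the n×n matrices whose k-th columns are x^(k) and y^(k) respectively. Then Y = A·X, and if X is invertible then A = Y·X⁻¹. -/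
/-- The inverse hyperbolic tangent. -/
noncomputable def artanh (x : ℝ) : ℝ := Real.log ((1 + x) / (1 - x)) / 2

lemma artanh_tanh (t : ℝ) : artanh (Real.tanh t) = t := by
  have hc : Real.cosh t ≠ 0 := (Real.cosh_pos t).ne'
  have h1 : 1 + Real.tanh t = Real.exp t / Real.cosh t := by
    rw [Real.tanh_eq_sinh_div_cosh]; field_simp; rw [Real.cosh_add_sinh]
  have h2 : 1 - Real.tanh t = Real.exp (-t) / Real.cosh t := by
    rw [Real.tanh_eq_sinh_div_cosh]; field_simp; rw [Real.cosh_sub_sinh]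
  have hr : Real.exp t / Real.cosh t / (Real.exp (-t) / Real.cosh t)
      = Real.exp (t - -t) := by
    rw [Real.exp_sub]; field_simp
  unfold artanh
  rw [h1, h2, hr, Real.log_exp]
  ring

/-- Given `n` input–equilibrium pairs of the nonlinear opinion dynamics, with
`y^(k)_i = (1/γ)(artanh((d x^(k)_i - b^(k)_i)/u) - α x^(k)_i)` and `X`, `Y` the matrices
with columns `x^(k)`, `y^(k)`, we have `Y = A X`; if `X` is invertible then `A = Y X⁻¹`. -/
theorem stmt7 (n : ℕ) (A : Matrix (Fin n) (Fin n) ℝ) (d α γ u : ℝ)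
    (hu : 0 < u) (hγ : γ ≠ 0) (x b y : Fin n → Fin n → ℝ)
    (heq : ∀ k i, -d * x k i + u * Real.tanh (α * x k i + γ * (A.mulVec (x k)) i) + b k i = 0)
    (hy : ∀ k i, y k i = (1 / γ) * (artanh ((d * x k i - b k i) / u) - α * x k i))
    (X Y : Matrix (Fin n) (Fin n) ℝ)
    (hX : ∀ i k, X i k = x k i) (hY : ∀ i k, Y i k = y k i) :
    Y = A * X ∧ (IsUnit X.det → A = Y * X⁻¹) := by
  have hYAX : Y = A * X := by
    ext i k
    have h := heq k i
    have ht : (d * x k i - b k i) / u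
        = Real.tanh (α * x k i + γ * (A.mulVec (x k)) i) := by
      rw [div_eq_iff hu.ne']
      linarith
    have hmul : (A * X) i k = (A.mulVec (x k)) i := by
      simp [Matrix.mul_apply, Matrix.mulVec, dotProduct, hX]
    rw [hY, hy, ht, artanh_tanh, hmul]
    field_simp
    ring
  refine ⟨hYAX, fun hdet => ?_⟩
  rw [hYAX, Matrix.mul_assoc, Matrix.mul_nonsing_inv X hdet, Matrix.mul_one]
end

section
/- Let n = 2m with m ≥ 1, let ℓs, ℓd ∈ [0,1] with ℓs + ℓd > 0, and let B be the n×n expected SSBM matrix with within-community value ℓs and between-community value ℓd. Let χ1 > χ2 > 0 and ε > 0 satisfy (ℓd − ℓs)·(χ1 − χ2) > 2·ε·(ℓs + ℓd), and let v ∈ ℝ^n satisfy |v_i − χ1| ≤ ε for all i ∈ {1,…,m} and |v_j − χ2| ≤ ε for all j ∈ {m+1,…,n}. Then for every i ∈ {1,…,m} and j ∈ {m+1,…,n} one has v_i > v_j and (B·v)_j − (B·v)_i ≥ (n/2)·[(ℓd − ℓs)·(χ1 − χ2) − 2·ε·(ℓs + ℓd)] > 0; consequently, v is not an eigenvector of B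 for any positive eigenvalue. -/
/-- The expected adjacency matrix of a symmetric SBM on `2m` vertices with
within-community value `ls` and between-community value `ld`. -/
def ssbmMatrix (m : ℕ) (ls ld : ℝ) : Matrix (Fin (2 * m)) (Fin (2 * m)) ℝ :=
  Matrix.of fun i j => if ((i : ℕ) < m ↔ (j : ℕ) < m) then ls else ld

/-- Deterministic core of the impossibility argument: if `v` is `ε`-close to `χ1` on
community 1 and to `χ2` on community 2, with `χ1 > χ2 > 0` and
`(ld - ls)(χ1 - χ2) > 2ε(ls + ld)`, then `v_i > v_j` while
`(Bv)_j - (Bv)_i ≥ (n/2)[(ld - ls)(χ1 - χ2) - 2ε(ls + ld)] > 0` for `i` in community 1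
and `j` in community 2; hence `v` is not an eigenvector of `B` for any positive
eigenvalue. -/
theorem stmt17 (m : ℕ) (hm : 1 ≤ m) (ls ld : ℝ)
    (hls : ls ∈ Set.Icc (0:ℝ) 1) (hld : ld ∈ Set.Icc (0:ℝ) 1) (hsum : 0 < ls + ld)
    (B : Matrix (Fin (2 * m)) (Fin (2 * m)) ℝ) (hB : B = ssbmMatrix m ls ld)
    (χ1 χ2 ε : ℝ) (h21 : χ2 < χ1) (h2pos : 0 < χ2) (hε : 0 < ε)
    (hgap : 2 * ε * (ls + ld) < (ld - ls) * (χ1 - χ2))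
    (v : Fin (2 * m) → ℝ)
    (hv1 : ∀ i : Fin (2 * m), (i : ℕ) < m → |v i - χ1| ≤ ε)
    (hv2 : ∀ j : Fin (2 * m), m ≤ (j : ℕ) → |v j - χ2| ≤ ε) :
    (∀ i j : Fin (2 * m), (i : ℕ) < m → m ≤ (j : ℕ) →
      v j < v i ∧
      ((2 * m : ℝ) / 2) * ((ld - ls) * (χ1 - χ2) - 2 * ε * (ls + ld)) ≤
        B.mulVec v j - B.mulVec v i) ∧
    0 < ((2 * m : ℝ) / 2) * ((ld - ls) * (χ1 - χ2) - 2 * ε * (ls + ld)) ∧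
    (∀ μ : ℝ, 0 < μ → B.mulVec v ≠ μ • v) := by
  classical
  have hmR : (1:ℝ) ≤ (m:ℝ) := by exact_mod_cast hm
  -- ld > ls
  have hldls : 0 < ld - ls := by
    by_contra h
    push_neg at h
    nlinarith
  -- 2ε < χ1 - χ2
  have hε2 : 2 * ε < χ1 - χ2 := by
    by_contra h
    push_neg at h
    nlinarith [hls.1, mul_nonneg hls.1 (sub_nonneg.mpr h21.le)]
  set s1 : Finset (Fin (2*m)) := Finset.univ.filter (fun k : Fin (2*m) => (k:ℕ) < m) with hs1
  set s2 : Finset (Fin (2*m)) := Finset.univ.filter (fun k : Fin (2*m) => ¬ (k:ℕ) < m) with hs2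
  set S1 : ℝ := ∑ k ∈ s1, v k with hS1
  set S2 : ℝ := ∑ k ∈ s2, v k with hS2
  have hcard1 : s1.card = m := by
    have heq : s1 = Finset.attachFin (Finset.range m)
        (fun x hx => by simp only [Finset.mem_range] at hx; omega) := by
      ext k
      simp [hs1, Finset.mem_attachFin]
    rw [heq, Finset.card_attachFin, Finset.card_range]
  have hcard2 : s2.card = m := by
    have h := Finset.card_filter_add_card_filter_not
      (s := (Finset.univ : Finset (Fin (2*m)))) (p := fun k : Fin (2*m) => (k:ℕ) < m)
    rw [Finset.card_univ, Fintype.card_fin] at h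
    rw [← hs1, ← hs2] at h
    omega
  have key : ∀ a b : ℝ, (∑ k : Fin (2*m), (if (k:ℕ) < m then a else b) * v k)
      = a * S1 + b * S2 := by
    intro a b
    rw [hS1, hS2, Finset.mul_sum, Finset.mul_sum,
      ← Finset.sum_filter_add_sum_filter_not Finset.univ (fun k : Fin (2*m) => (k:ℕ) < m)
        (fun k => (if (k:ℕ) < m then a else b) * v k)]
    congr 1
    · refine Finset.sum_congr rfl fun k hk => ?_
      rw [hs1] at hk
      simp only [Finset.mem_filter] at hk
      rw [if_pos hk.2]
    · refine Finset.sum_congr rfl fun k hk => ?_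
      rw [hs2] at hk
      simp only [Finset.mem_filter] at hk
      rw [if_neg hk.2]
  have hBvi : ∀ i : Fin (2*m), (i:ℕ) < m → B.mulVec v i = ls * S1 + ld * S2 := by
    intro i hi
    rw [hB]
    show (∑ k, ssbmMatrix m ls ld i k * v k) = _
    have : (∑ k, ssbmMatrix m ls ld i k * v k)
        = ∑ k : Fin (2*m), (if (k:ℕ) < m then ls else ld) * v k := by
      refine Finset.sum_congr rfl fun k _ => ?_
      simp [ssbmMatrix, hi]
    rw [this, key]
  have hBvj : ∀ j : Fin (2*m), ¬ (j:ℕ) < m → B.mulVec v j = ld * S1 + ls * S2 := by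
    intro j hj
    rw [hB]
    show (∑ k, ssbmMatrix m ls ld j k * v k) = _
    have : (∑ k, ssbmMatrix m ls ld j k * v k)
        = ∑ k : Fin (2*m), (if (k:ℕ) < m then ld else ls) * v k := by
      refine Finset.sum_congr rfl fun k _ => ?_
      by_cases hk : (k:ℕ) < m <;> simp [ssbmMatrix, hj, hk]
    rw [this, key]
  have hS1lo : (m:ℝ) * (χ1 - ε) ≤ S1 := by
    have h := Finset.card_nsmul_le_sum s1 v (χ1 - ε) (fun k hk => by
      rw [hs1] at hk; simp only [Finset.mem_filter] at hk
      have := abs_le.mp (hv1 k hk.2)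
      linarith [this.1])
    rwa [hcard1, nsmul_eq_mul] at h
  have hS2hi : S2 ≤ (m:ℝ) * (χ2 + ε) := by
    have h := Finset.sum_le_card_nsmul s2 v (χ2 + ε) (fun k hk => by
      rw [hs2] at hk; simp only [Finset.mem_filter] at hk
      have := abs_le.mp (hv2 k (by omega))
      linarith [this.2])
    rwa [hcard2, nsmul_eq_mul] at h
  have hgapm : 0 < (ld - ls) * (χ1 - χ2) - 2 * ε * (ls + ld) := by linarith
  have main : ∀ i j : Fin (2 * m), (i : ℕ) < m → m ≤ (j : ℕ) →
      v j < v i ∧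
      ((2 * m : ℝ) / 2) * ((ld - ls) * (χ1 - χ2) - 2 * ε * (ls + ld)) ≤
        B.mulVec v j - B.mulVec v i := by
    intro i j hi hj
    have h1 := abs_le.mp (hv1 i hi)
    have h2 := abs_le.mp (hv2 j hj)
    refine ⟨by linarith, ?_⟩
    rw [hBvi i hi, hBvj j (by omega)]
    have hA : (m:ℝ) * ((χ1 - χ2) - 2*ε) ≤ S1 - S2 := by linarith
    have hBm := mul_le_mul_of_nonneg_left hA hldls.le
    have hC : (m:ℝ) * ((ld - ls) * (χ1 - χ2) - 2 * ε * (ls + ld))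
        ≤ (ld - ls) * ((m:ℝ) * ((χ1 - χ2) - 2*ε)) := by
      nlinarith [mul_nonneg (mul_nonneg (le_trans zero_le_one hmR) hε.le) hls.1]
    have : (2 * (m:ℝ)) / 2 = (m:ℝ) := by ring
    rw [this]
    nlinarith
  refine ⟨main, by positivity, ?_⟩
  intro μ hμ heq
  have h2m : m < 2 * m := by omega
  set i0 : Fin (2*m) := ⟨0, by omega⟩
  set j0 : Fin (2*m) := ⟨m, h2m⟩
  obtain ⟨hlt, hge⟩ := main i0 j0 (show (0:ℕ) < m by omega) (show m ≤ m from le_refl m)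
  rw [heq] at hge
  simp only [Pi.smul_apply, smul_eq_mul] at hge
  have hneg : μ * v j0 - μ * v i0 < 0 := by
    have := mul_neg_of_pos_of_neg hμ (by linarith : v j0 - v i0 < 0)
    nlinarith
  nlinarith [mul_pos (by linarith : (0:ℝ) < (2*(m:ℝ))/2) hgapm]
end
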